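/- The reduction relation ⟹ generated by the cut-elimination rewrites (1)–(12) on ΣΠ_A-terms is terminating (there is no infinite sequence of reductions), and every ΣΠ_A-term t reduces, t ⟹* t', to a term t' in which the only cuts are essential, i.e. every cut subterm of t' is a cut of two atomic maps of A. -/

import Mathlib

/-!
STATEMENT 2: The cut-elimination rewriting relation ⟹ on ΣΠ_A-terms is
terminating, and every (well-typed) ΣΠ_A-term reduces to a term in which the
only cuts are essential, i.e. every cut subterm is a cut of atomic maps of `A`.
-/

namespace Stmt2

/-- ΣΠ-formulas over a set of atoms `At`: atoms, finite-family sums and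
finite-family products (events are represented by positions in the list). -/
inductive Formula (At : Type) : Type where
  | atom : At → Formula At
  | sum : List (Formula At) → Formula At
  | prod : List (Formula At) → Formula At

/-- ΣΠ_A-terms: identities on atoms, atomic maps of the polycategory `A`
(elements of `Ax`), cotuples, tuples, projections, injections and cuts. -/
inductive Tm (Ax Chan : Type) : Type where
  | id : Chan → Chan → Tm Ax Chan
  | ax : Ax → Tm Ax Chan
  | cot : Chan → List (Tm Ax Chan) → Tm Ax Chan
  | tup : Chan → List (Tm Ax Chan) → Tm Ax Chan
  | prj : Chan → ℕ → Tm Ax Chan → Tm Ax Chan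
  | inj : Chan → ℕ → Tm Ax Chan → Tm Ax Chan
  | cut : Chan → Tm Ax Chan → Tm Ax Chan → Tm Ax Chan

variable {At Ax Chan : Type}
set_option linter.unusedSectionVars false

/-- The one-step cut-elimination rewrites (1)–(12), closed under all term
contexts. -/
inductive Red : Tm Ax Chan → Tm Ax Chan → Prop where
  | r1 (γ β : Chan) (f : Tm Ax Chan) : Red (.cut γ f (.id γ β)) f
  | r2 (γ α : Chan) (g : Tm Ax Chan) : Red (.cut γ (.id α γ) g) g
  | r3 (γ α : Chan) (fs : List (Tm Ax Chan)) (g : Tm Ax Chan) :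
      Red (.cut γ (.cot α fs) g) (.cot α (fs.map fun f => .cut γ f g))
  | r4 (γ β : Chan) (f : Tm Ax Chan) (gs : List (Tm Ax Chan)) :
      Red (.cut γ f (.tup β gs)) (.tup β (gs.map fun g => .cut γ f g))
  | r5 (γ α : Chan) (k : ℕ) (f g : Tm Ax Chan) : α ≠ γ →
      Red (.cut γ (.inj α k f) g) (.inj α k (.cut γ f g))
  | r6 (γ β : Chan) (k : ℕ) (f g : Tm Ax Chan) : β ≠ γ →
      Red (.cut γ f (.prj β k g)) (.prj β k (.cut γ f g))
  | r7 (γ α : Chan) (k : ℕ) (f g : Tm Ax Chan) :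
      Red (.cut γ (.prj α k f) g) (.prj α k (.cut γ f g))
  | r8 (γ β : Chan) (k : ℕ) (f g : Tm Ax Chan) :
      Red (.cut γ f (.inj β k g)) (.inj β k (.cut γ f g))
  | r9 (γ α : Chan) (fs : List (Tm Ax Chan)) (g : Tm Ax Chan) : α ≠ γ →
      Red (.cut γ (.tup α fs) g) (.tup α (fs.map fun f => .cut γ f g))
  | r10 (γ β : Chan) (f : Tm Ax Chan) (gs : List (Tm Ax Chan)) : β ≠ γ →
      Red (.cut γ f (.cot β gs)) (.cot β (gs.map fun g => .cut γ f g))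
  | r11 (γ : Chan) (k : ℕ) (f : Tm Ax Chan) (gs : List (Tm Ax Chan)) (hk : k < gs.length) :
      Red (.cut γ (.inj γ k f) (.cot γ gs)) (.cut γ f (gs.get ⟨k, hk⟩))
  | r12 (γ : Chan) (k : ℕ) (fs : List (Tm Ax Chan)) (g : Tm Ax Chan) (hk : k < fs.length) :
      Red (.cut γ (.tup γ fs) (.prj γ k g)) (.cut γ (fs.get ⟨k, hk⟩) g)
  | cotC (α : Chan) (l r : List (Tm Ax Chan)) {f f' : Tm Ax Chan} :
      Red f f' → Red (.cot α (l ++ f :: r)) (.cot α (l ++ f' :: r))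
  | tupC (α : Chan) (l r : List (Tm Ax Chan)) {f f' : Tm Ax Chan} :
      Red f f' → Red (.tup α (l ++ f :: r)) (.tup α (l ++ f' :: r))
  | prjC (α : Chan) (k : ℕ) {f f' : Tm Ax Chan} :
      Red f f' → Red (.prj α k f) (.prj α k f')
  | injC (α : Chan) (k : ℕ) {f f' : Tm Ax Chan} :
      Red f f' → Red (.inj α k f) (.inj α k f')
  | cutL (γ : Chan) {f f' : Tm Ax Chan} (g : Tm Ax Chan) :
      Red f f' → Red (.cut γ f g) (.cut γ f' g)
  | cutR (γ : Chan) (f : Tm Ax Chan) {g g' : Tm Ax Chan} :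
      Red g g' → Red (.cut γ f g) (.cut γ f g')
/-- A (two-sided, unordered) context: an assignment of formulas to
finitely many channel names. -/
abbrev Ctx (Chan At : Type) : Type := Chan → Option (Formula At)

variable [DecidableEq Chan]

/-- The singleton context `α : X`. -/
def Ctx.single (α : Chan) (X : Formula At) : Ctx Chan At :=
  fun c => if c = α then some X else none

/-- Extension of a context by `α : X` (to be used when `Γ α = none`). -/
def Ctx.cons (Γ : Ctx Chan At) (α : Chan) (X : Formula At) : Ctx Chan At :=
  fun c => if c = α then some X else Γ c

/-- Disjointness of the supports of two contexts. -/
def Ctx.Disj (Γ Γ' : Ctx Chan At) : Prop := ∀ c, Γ c = none ∨ Γ' c = none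

/-- Union of two (disjoint) contexts. -/
def Ctx.union (Γ Γ' : Ctx Chan At) : Ctx Chan At :=
  fun c => (Γ c).orElse fun _ => Γ' c

/-- Typing of ΣΠ_A-terms by sequents `Γ ⊢ Δ`, over a polycategory of atomic
maps `Ax` typed by `dA`/`cA`. -/
inductive HasType (dA cA : Ax → Ctx Chan At) :
    Tm Ax Chan → Ctx Chan At → Ctx Chan At → Prop where
  | id (α β : Chan) (A : At) :
      HasType dA cA (.id α β) (Ctx.single α (.atom A)) (Ctx.single β (.atom A))
  | ax (a : Ax) : HasType dA cA (.ax a) (dA a) (cA a)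
  | cot {Γ Δ : Ctx Chan At} {α : Chan} {Xs : List (Formula At)} {fs : List (Tm Ax Chan)}
      (hα : Γ α = none) (hlen : fs.length = Xs.length)
      (h : ∀ i : Fin fs.length,
        HasType dA cA (fs.get i) (Γ.cons α (Xs.get (Fin.cast hlen i))) Δ) :
      HasType dA cA (.cot α fs) (Γ.cons α (.sum Xs)) Δ
  | tup {Γ Δ : Ctx Chan At} {α : Chan} {Xs : List (Formula At)} {fs : List (Tm Ax Chan)}
      (hα : Δ α = none) (hlen : fs.length = Xs.length)
      (h : ∀ i : Fin fs.length,
        HasType dA cA (fs.get i) Γ (Δ.cons α (Xs.get (Fin.cast hlen i)))) :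
      HasType dA cA (.tup α fs) Γ (Δ.cons α (.prod Xs))
  | prj {Γ Δ : Ctx Chan At} {α : Chan} {Xs : List (Formula At)} {k : ℕ} {f : Tm Ax Chan}
      (hα : Γ α = none) (hk : k < Xs.length)
      (h : HasType dA cA f (Γ.cons α (Xs.get ⟨k, hk⟩)) Δ) :
      HasType dA cA (.prj α k f) (Γ.cons α (.prod Xs)) Δ
  | inj {Γ Δ : Ctx Chan At} {α : Chan} {Xs : List (Formula At)} {k : ℕ} {f : Tm Ax Chan}
      (hα : Δ α = none) (hk : k < Xs.length)
      (h : HasType dA cA f Γ (Δ.cons α (Xs.get ⟨k, hk⟩))) :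
      HasType dA cA (.inj α k f) Γ (Δ.cons α (.sum Xs))
  | cut {Γ Δ Γ' Δ' : Ctx Chan At} {γ : Chan} {Z : Formula At} {f g : Tm Ax Chan}
      (h1 : Ctx.Disj Γ Γ') (h2 : Ctx.Disj Δ Δ') (h3 : Δ γ = none) (h4 : Γ' γ = none)
      (hf : HasType dA cA f Γ (Δ.cons γ Z)) (hg : HasType dA cA g (Γ'.cons γ Z) Δ') :
      HasType dA cA (.cut γ f g) (Γ.union Γ') (Δ.union Δ')

/-- Terms denoting (composites of) atomic maps of the polycategory `A`:
atomic maps, identities, and cuts of such. -/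
inductive Atomic : Tm Ax Chan → Prop where
  | id (α β : Chan) : Atomic (.id α β)
  | ax (a : Ax) : Atomic (.ax a)
  | cut (γ : Chan) {f g : Tm Ax Chan} : Atomic f → Atomic g → Atomic (.cut γ f g)

/-- Every cut subterm is essential: a cut of (composites of) atomic maps. -/
inductive OnlyEssentialCuts : Tm Ax Chan → Prop where
  | id (α β : Chan) : OnlyEssentialCuts (.id α β)
  | ax (a : Ax) : OnlyEssentialCuts (.ax a)
  | cot (α : Chan) {fs : List (Tm Ax Chan)} :
      (∀ f ∈ fs, OnlyEssentialCuts f) → OnlyEssentialCuts (.cot α fs)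
  | tup (α : Chan) {fs : List (Tm Ax Chan)} :
      (∀ f ∈ fs, OnlyEssentialCuts f) → OnlyEssentialCuts (.tup α fs)
  | prj (α : Chan) (k : ℕ) {f : Tm Ax Chan} :
      OnlyEssentialCuts f → OnlyEssentialCuts (.prj α k f)
  | inj (α : Chan) (k : ℕ) {f : Tm Ax Chan} :
      OnlyEssentialCuts f → OnlyEssentialCuts (.inj α k f)
  | cut (γ : Chan) {f g : Tm Ax Chan} :
      Atomic f → Atomic g → OnlyEssentialCuts (.cut γ f g)

/-! ### Weight function and termination -/

mutual
def w : Tm Ax Chan → ℕ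
  | .id _ _ => 2
  | .ax _ => 2
  | .cot _ fs => 2 + sumW fs
  | .tup _ fs => 2 + sumW fs
  | .prj _ _ f => 2 + w f
  | .inj _ _ f => 2 + w f
  | .cut _ f g => w f * w g

def sumW : List (Tm Ax Chan) → ℕ
  | [] => 0
  | f :: fs => w f + sumW fs
end

theorem w_pos (t : Tm Ax Chan) : 2 ≤ w t := by
  cases t with
  | cut γ f g => have := w_pos f; have := w_pos g; simp [w]; nlinarith
  | _ => simp [w]

theorem sumW_append (l r : List (Tm Ax Chan)) : sumW (l ++ r) = sumW l + sumW r := by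
  induction l with
  | nil => simp [sumW]
  | cons f fs ih => simp [sumW, ih]; omega

theorem sumW_map_cut (γ : Chan) (g : Tm Ax Chan) (fs : List (Tm Ax Chan)) :
    sumW (fs.map fun f => Tm.cut γ f g) = sumW fs * w g := by
  induction fs with
  | nil => simp [sumW]
  | cons f fs ih => simp [sumW, w, ih]; ring

theorem sumW_map_cut' (γ : Chan) (f : Tm Ax Chan) (gs : List (Tm Ax Chan)) :
    sumW (gs.map fun g => Tm.cut γ f g) = w f * sumW gs := by
  induction gs with
  | nil => simp [sumW]
  | cons g gs ih => simp [sumW, w, ih]; ring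

theorem mem_le_sumW {f : Tm Ax Chan} {fs : List (Tm Ax Chan)} (h : f ∈ fs) : w f ≤ sumW fs := by
  induction fs with
  | nil => simp at h
  | cons a as ih =>
    rcases List.mem_cons.1 h with rfl | h
    · simp [sumW]
    · have := ih h; simp [sumW]; omega

theorem red_w {t t' : Tm Ax Chan} (h : Red t t') : w t' < w t := by
  induction h with
  | r1 γ β f => have := w_pos f; simp [w]; omega
  | r2 γ α g => have := w_pos g; simp [w]; omega
  | r3 γ α fs g =>
      have hg := w_pos g; simp [w, sumW_map_cut]; nlinarith
  | r4 γ β f gs =>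
      have hf := w_pos f; simp [w, sumW_map_cut']; nlinarith
  | r5 γ α k f g _ => have := w_pos g; simp [w]; nlinarith
  | r6 γ β k f g _ => have := w_pos f; simp [w]; nlinarith
  | r7 γ α k f g => have := w_pos g; simp [w]; nlinarith
  | r8 γ β k f g => have := w_pos f; simp [w]; nlinarith
  | r9 γ α fs g _ => have := w_pos g; simp [w, sumW_map_cut]; nlinarith
  | r10 γ β f gs _ => have := w_pos f; simp [w, sumW_map_cut']; nlinarith
  | r11 γ k f gs hk =>
      have h1 := mem_le_sumW (List.get_mem gs ⟨k, hk⟩)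
      have := w_pos f; have := w_pos (gs.get ⟨k, hk⟩)
      simp only [List.get_eq_getElem] at h1 this
      simp [w]; nlinarith
  | r12 γ k fs g hk =>
      have h1 := mem_le_sumW (List.get_mem fs ⟨k, hk⟩)
      have := w_pos g; have := w_pos (fs.get ⟨k, hk⟩)
      simp only [List.get_eq_getElem] at h1 this
      simp [w]; nlinarith
  | cotC α l r hred ih => simp [w, sumW_append, sumW]; omega
  | tupC α l r hred ih => simp [w, sumW_append, sumW]; omega
  | prjC α k hred ih => simp [w]; omega
  | injC α k hred ih => simp [w]; omega
  | cutL γ g hred ih => have := w_pos g; simp [w]; nlinarith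
  | cutR γ f hred ih => have := w_pos f; simp [w]; nlinarith

theorem red_acc (t : Tm Ax Chan) : Acc (fun a b : Tm Ax Chan => Red b a) t := by
  have : ∀ n (t : Tm Ax Chan), w t ≤ n → Acc (fun a b : Tm Ax Chan => Red b a) t := by
    intro n
    induction n with
    | zero => intro t ht; have := w_pos t; omega
    | succ n ih =>
      intro t ht
      exact Acc.intro t fun t' h => ih t' (by have := red_w h; omega)
  exact this (w t) t le_rfl
/-! ### Context algebra -/

theorem cons_apply_self (Γ : Ctx Chan At) (α : Chan) (X : Formula At) :
    Γ.cons α X α = some X := by simp [Ctx.cons]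

theorem cons_apply_ne (Γ : Ctx Chan At) (α : Chan) (X : Formula At) {c : Chan} (h : c ≠ α) :
    Γ.cons α X c = Γ c := by simp [Ctx.cons, h]

theorem union_apply_some {Γ Γ' : Ctx Chan At} {c : Chan} {X : Formula At} (h : Γ c = some X) :
    Γ.union Γ' c = some X := by simp [Ctx.union, h]

theorem union_apply_none {Γ Γ' : Ctx Chan At} {c : Chan} (h : Γ c = none) :
    Γ.union Γ' c = Γ' c := by simp [Ctx.union, h]

theorem union_apply (Γ Γ' : Ctx Chan At) (c : Chan) :
    Γ.union Γ' c = (Γ c).orElse (fun _ => Γ' c) := rfl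

theorem cons_union (Γ Γ' : Ctx Chan At) (α : Chan) (X : Formula At) :
    (Γ.cons α X).union Γ' = (Γ.union Γ').cons α X := by
  funext c
  by_cases hc : c = α
  · subst hc; rw [union_apply_some (cons_apply_self ..), cons_apply_self]
  · rw [union_apply, cons_apply_ne _ _ _ hc, cons_apply_ne _ _ _ hc, union_apply]

theorem union_cons {Γ : Ctx Chan At} (Γ' : Ctx Chan At) {β : Chan} (X : Formula At)
    (h : Γ β = none) : Γ.union (Γ'.cons β X) = (Γ.union Γ').cons β X := by
  funext c
  by_cases hc : c = β
  · subst hc; rw [union_apply_none h, cons_apply_self, cons_apply_self]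
  · rw [union_apply, cons_apply_ne _ _ _ hc, cons_apply_ne _ _ _ hc, union_apply]

theorem cons_eq_self {Γ : Ctx Chan At} {α : Chan} {X : Formula At} (h : Γ α = some X) :
    Γ.cons α X = Γ := by
  funext c
  by_cases hc : c = α
  · subst hc; rw [cons_apply_self, h]
  · rw [cons_apply_ne _ _ _ hc]

theorem cons_cons (Γ : Ctx Chan At) (α : Chan) (X Y : Formula At) :
    (Γ.cons α X).cons α Y = Γ.cons α Y := by
  funext c
  by_cases hc : c = α
  · subst hc; rw [cons_apply_self, cons_apply_self]
  · rw [cons_apply_ne _ _ _ hc, cons_apply_ne _ _ _ hc, cons_apply_ne _ _ _ hc]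

theorem Ctx.Disj.congr_cons {Γ Γ' : Ctx Chan At} {α : Chan} {X : Formula At}
    (h : Ctx.Disj (Γ.cons α X) Γ') (Y : Formula At) : Ctx.Disj (Γ.cons α Y) Γ' := by
  intro c
  rcases h c with hc | hc
  · by_cases hca : c = α
    · subst hca; rw [cons_apply_self] at hc; exact absurd hc (by simp)
    · left; rwa [cons_apply_ne _ _ _ hca] at hc ⊢
  · right; exact hc

theorem Ctx.Disj.congr_cons' {Γ Γ' : Ctx Chan At} {α : Chan} {X : Formula At}
    (h : Ctx.Disj Γ' (Γ.cons α X)) (Y : Formula At) : Ctx.Disj Γ' (Γ.cons α Y) := by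
  intro c
  rcases h c with hc | hc
  · left; exact hc
  · by_cases hca : c = α
    · subst hca; rw [cons_apply_self] at hc; exact absurd hc (by simp)
    · right; rwa [cons_apply_ne _ _ _ hca] at hc ⊢

/-! ### Atomic terms have atomic contexts -/

theorem atomic_atoms {dA cA : Ax → Ctx Chan At}
    (hdA : ∀ a c X, dA a c = some X → ∃ A, X = Formula.atom A)
    (hcA : ∀ a c X, cA a c = some X → ∃ A, X = Formula.atom A)
    {t : Tm Ax Chan} {Γ Δ : Ctx Chan At} (hA : Atomic t) (ht : HasType dA cA t Γ Δ) :
    (∀ c X, Γ c = some X → ∃ A, X = Formula.atom A) ∧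
    (∀ c X, Δ c = some X → ∃ A, X = Formula.atom A) := by
  induction hA generalizing Γ Δ with
  | id α β =>
    cases ht with
    | id _ _ A =>
      constructor <;>
      · intro c X h
        simp only [Ctx.single] at h
        split at h
        · exact ⟨A, (Option.some.inj h).symm⟩
        · exact nomatch h
  | ax a => cases ht; exact ⟨fun c X h => hdA a c X h, fun c X h => hcA a c X h⟩
  | cut γ hf hg ihf ihg =>
    cases ht with
    | @cut Γ₁ Δ₁ Γ₂ Δ₂ _ Z _ _ h1 h2 h3 h4 htf htg =>
      obtain ⟨L1, R1⟩ := ihf htf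
      obtain ⟨L2, R2⟩ := ihg htg
      constructor
      · intro c X h
        cases hc : Γ₁ c with
        | some Y =>
          rw [union_apply_some hc] at h
          injection h with h; subst h
          exact L1 c _ hc
        | none =>
          rw [union_apply_none hc] at h
          have hcγ : c ≠ γ := by rintro rfl; rw [h4] at h; exact nomatch h
          exact L2 c X (by rwa [cons_apply_ne _ _ _ hcγ])
      · intro c X h
        cases hc : Δ₁ c with
        | some Y =>
          rw [union_apply_some hc] at h
          injection h with h; subst h
          have hcγ : c ≠ γ := by rintro rfl; rw [h3] at hc; exact nomatch hc
          exact R1 c _ (by rw [cons_apply_ne _ _ _ hcγ]; exact hc)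
        | none =>
          rw [union_apply_none hc] at h
          exact R2 c X h

/-! ### Congruence closure of reduction sequences -/

theorem rtg_prj (α : Chan) (k : ℕ) {f f' : Tm Ax Chan}
    (h : Relation.ReflTransGen Red f f') :
    Relation.ReflTransGen Red (.prj α k f) (.prj α k f') :=
  Relation.ReflTransGen.lift (fun x => Tm.prj α k x) (fun _ _ hr => Red.prjC α k hr) _ _ h

theorem rtg_inj (α : Chan) (k : ℕ) {f f' : Tm Ax Chan}
    (h : Relation.ReflTransGen Red f f') :
    Relation.ReflTransGen Red (.inj α k f) (.inj α k f') :=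
  Relation.ReflTransGen.lift (fun x => Tm.inj α k x) (fun _ _ hr => Red.injC α k hr) _ _ h

theorem rtg_cutL (γ : Chan) (g : Tm Ax Chan) {f f' : Tm Ax Chan}
    (h : Relation.ReflTransGen Red f f') :
    Relation.ReflTransGen Red (.cut γ f g) (.cut γ f' g) :=
  Relation.ReflTransGen.lift (fun x => Tm.cut γ x g) (fun _ _ hr => Red.cutL γ g hr) _ _ h

theorem rtg_cutR (γ : Chan) (f : Tm Ax Chan) {g g' : Tm Ax Chan}
    (h : Relation.ReflTransGen Red g g') :
    Relation.ReflTransGen Red (.cut γ f g) (.cut γ f g') :=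
  Relation.ReflTransGen.lift (fun x => Tm.cut γ f x) (fun _ _ hr => Red.cutR γ f hr) _ _ h

theorem rtg_cot_aux (α : Chan) {fs ts : List (Tm Ax Chan)}
    (h : List.Forall₂ (Relation.ReflTransGen Red) fs ts) :
    ∀ pre : List (Tm Ax Chan),
      Relation.ReflTransGen Red (.cot α (pre ++ fs)) (.cot α (pre ++ ts)) := by
  induction h with
  | nil => intro pre; exact Relation.ReflTransGen.refl
  | @cons f t fs ts hft _ ih =>
    intro pre
    have step1 : Relation.ReflTransGen Red (.cot α (pre ++ f :: fs)) (.cot α (pre ++ t :: fs)) :=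
      Relation.ReflTransGen.lift (fun x => Tm.cot α (pre ++ x :: fs))
        (fun _ _ hr => Red.cotC α pre fs hr) _ _ hft
    have step2 := ih (pre ++ [t])
    simp only [List.append_assoc, List.singleton_append] at step2
    exact step1.trans step2

theorem rtg_cot (α : Chan) {fs ts : List (Tm Ax Chan)}
    (h : List.Forall₂ (Relation.ReflTransGen Red) fs ts) :
    Relation.ReflTransGen Red (.cot α fs) (.cot α ts) := by
  simpa using rtg_cot_aux α h []

theorem rtg_tup_aux (α : Chan) {fs ts : List (Tm Ax Chan)}
    (h : List.Forall₂ (Relation.ReflTransGen Red) fs ts) :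
    ∀ pre : List (Tm Ax Chan),
      Relation.ReflTransGen Red (.tup α (pre ++ fs)) (.tup α (pre ++ ts)) := by
  induction h with
  | nil => intro pre; exact Relation.ReflTransGen.refl
  | @cons f t fs ts hft _ ih =>
    intro pre
    have step1 : Relation.ReflTransGen Red (.tup α (pre ++ f :: fs)) (.tup α (pre ++ t :: fs)) :=
      Relation.ReflTransGen.lift (fun x => Tm.tup α (pre ++ x :: fs))
        (fun _ _ hr => Red.tupC α pre fs hr) _ _ hft
    have step2 := ih (pre ++ [t])
    simp only [List.append_assoc, List.singleton_append] at step2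
    exact step1.trans step2

theorem rtg_tup (α : Chan) {fs ts : List (Tm Ax Chan)}
    (h : List.Forall₂ (Relation.ReflTransGen Red) fs ts) :
    Relation.ReflTransGen Red (.tup α fs) (.tup α ts) := by
  simpa using rtg_tup_aux α h []
/-! ### More context helpers -/

theorem disj_none_right {Γ Γ' : Ctx Chan At} (h : Ctx.Disj Γ Γ') {c : Chan} {X : Formula At}
    (hc : Γ c = some X) : Γ' c = none := by
  rcases h c with h' | h'
  · rw [hc] at h'; exact nomatch h'
  · exact h'

theorem disj_none_left {Γ Γ' : Ctx Chan At} (h : Ctx.Disj Γ Γ') {c : Chan} {X : Formula At}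
    (hc : Γ' c = some X) : Γ c = none := by
  rcases h c with h' | h'
  · exact h'
  · rw [hc] at h'; exact nomatch h'

theorem Ctx.Disj.cons_of_some {Γ Δ : Ctx Chan At} (h : Ctx.Disj Γ Δ) {α : Chan} {Y : Formula At}
    (hY : Γ α = some Y) (X : Formula At) : Ctx.Disj (Γ.cons α X) Δ := by
  intro c
  by_cases hc : c = α
  · subst hc; right; exact disj_none_right h hY
  · rw [cons_apply_ne _ _ _ hc]; exact h c

theorem Ctx.Disj.consr_of_some {Γ Δ : Ctx Chan At} (h : Ctx.Disj Γ Δ) {β : Chan} {Y : Formula At}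
    (hY : Δ β = some Y) (X : Formula At) : Ctx.Disj Γ (Δ.cons β X) := by
  intro c
  by_cases hc : c = β
  · subst hc; left; exact disj_none_left h hY
  · rw [cons_apply_ne _ _ _ hc]; exact h c

/-- Deleting a channel from a context. -/
def Ctx.del (Γ : Ctx Chan At) (α : Chan) : Ctx Chan At := fun c => if c = α then none else Γ c

theorem del_apply_self (Γ : Ctx Chan At) (α : Chan) : Γ.del α α = none := by simp [Ctx.del]

theorem del_cons (Γ : Ctx Chan At) (α : Chan) (X : Formula At) :
    (Γ.del α).cons α X = Γ.cons α X := by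
  funext c
  by_cases hc : c = α
  · subst hc; rw [cons_apply_self, cons_apply_self]
  · rw [cons_apply_ne _ _ _ hc, cons_apply_ne _ _ _ hc]; simp [Ctx.del, hc]

/-! ### Typing inversion -/

variable {dA cA : Ax → Ctx Chan At}

theorem cot_inv {α : Chan} {fs : List (Tm Ax Chan)} {Γ Δ : Ctx Chan At}
    (h : HasType dA cA (.cot α fs) Γ Δ) :
    ∃ (Γ₀ : Ctx Chan At) (Xs : List (Formula At)) (hlen : fs.length = Xs.length),
      Γ₀ α = none ∧ Γ = Γ₀.cons α (.sum Xs) ∧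
      ∀ i : Fin fs.length,
        HasType dA cA (fs.get i) (Γ₀.cons α (Xs.get (Fin.cast hlen i))) Δ := by
  cases h with
  | cot hα hlen hts => exact ⟨_, _, hlen, hα, rfl, hts⟩

theorem tup_inv {α : Chan} {fs : List (Tm Ax Chan)} {Γ Δ : Ctx Chan At}
    (h : HasType dA cA (.tup α fs) Γ Δ) :
    ∃ (Δ₀ : Ctx Chan At) (Xs : List (Formula At)) (hlen : fs.length = Xs.length),
      Δ₀ α = none ∧ Δ = Δ₀.cons α (.prod Xs) ∧
      ∀ i : Fin fs.length,
        HasType dA cA (fs.get i) Γ (Δ₀.cons α (Xs.get (Fin.cast hlen i))) := by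
  cases h with
  | tup hα hlen hts => exact ⟨_, _, hlen, hα, rfl, hts⟩

theorem prj_inv {α : Chan} {k : ℕ} {f : Tm Ax Chan} {Γ Δ : Ctx Chan At}
    (h : HasType dA cA (.prj α k f) Γ Δ) :
    ∃ (Γ₀ : Ctx Chan At) (Xs : List (Formula At)) (hk : k < Xs.length),
      Γ₀ α = none ∧ Γ = Γ₀.cons α (.prod Xs) ∧
      HasType dA cA f (Γ₀.cons α (Xs.get ⟨k, hk⟩)) Δ := by
  cases h with
  | prj hα hk hf => exact ⟨_, _, hk, hα, rfl, hf⟩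

theorem inj_inv {α : Chan} {k : ℕ} {f : Tm Ax Chan} {Γ Δ : Ctx Chan At}
    (h : HasType dA cA (.inj α k f) Γ Δ) :
    ∃ (Δ₀ : Ctx Chan At) (Xs : List (Formula At)) (hk : k < Xs.length),
      Δ₀ α = none ∧ Δ = Δ₀.cons α (.sum Xs) ∧
      HasType dA cA f Γ (Δ₀.cons α (Xs.get ⟨k, hk⟩)) := by
  cases h with
  | inj hα hk hf => exact ⟨_, _, hk, hα, rfl, hf⟩

/-! ### Normalizing lists of terms -/

theorem list_norm {fs : List (Tm Ax Chan)} (F : Tm Ax Chan → Tm Ax Chan)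
    (P : ℕ → Tm Ax Chan → Prop)
    (h : ∀ i : Fin fs.length, ∃ t', Relation.ReflTransGen Red (F (fs.get i)) t' ∧
      OnlyEssentialCuts t' ∧ P i.val t') :
    ∃ ts : List (Tm Ax Chan), ts.length = fs.length ∧
      List.Forall₂ (Relation.ReflTransGen Red) (fs.map F) ts ∧
      (∀ t ∈ ts, OnlyEssentialCuts t) ∧
      ∀ i : Fin ts.length, P i.val (ts.get i) := by
  classical
  refine ⟨List.ofFn (fun i : Fin fs.length => (h i).choose), by simp, ?_, ?_, ?_⟩
  · rw [List.forall₂_iff_get]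
    constructor
    · simp
    · intro i h₁ h₂
      simp only [List.get_eq_getElem, List.getElem_map, List.getElem_ofFn]
      have h₁' : i < fs.length := by simpa using h₁
      exact (h ⟨i, h₁'⟩).choose_spec.1
  · intro t ht
    rw [List.mem_ofFn] at ht
    obtain ⟨i, rfl⟩ := ht
    exact (h i).choose_spec.2.1
  · intro i
    have hi : i.val < fs.length := by simpa using i.isLt
    simp only [List.get_eq_getElem, List.getElem_ofFn]
    exact (h ⟨i.val, hi⟩).choose_spec.2.2
/-! ### The key cut-pushing lemma -/

def KeyIH (dA cA : Ax → Ctx Chan At) (n : ℕ) : Prop :=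
  ∀ (f g : Tm Ax Chan) (γ : Chan) (Z : Formula At) (Γ Δ Γ' Δ' : Ctx Chan At),
    w f * w g ≤ n → Ctx.Disj Γ Γ' → Ctx.Disj Δ Δ' → Δ γ = none → Γ' γ = none →
    HasType dA cA f Γ (Δ.cons γ Z) → HasType dA cA g (Γ'.cons γ Z) Δ' →
    OnlyEssentialCuts f → OnlyEssentialCuts g →
    ∃ t', Relation.ReflTransGen Red (.cut γ f g) t' ∧ OnlyEssentialCuts t' ∧
      HasType dA cA t' (Γ.union Γ') (Δ.union Δ')

variable {dA cA : Ax → Ctx Chan At}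

/-- Case `g = tup β gs` : rule (4). -/
theorem gcase_tup {n : ℕ} (ih : KeyIH dA cA n)
    (γ β : Chan) (Z : Formula At) (f : Tm Ax Chan) (gs : List (Tm Ax Chan))
    (Γ Δ Γ' Δ' : Ctx Chan At)
    (hn : w f * w (.tup β gs) ≤ n + 1)
    (h1 : Ctx.Disj Γ Γ') (h2 : Ctx.Disj Δ Δ') (h3 : Δ γ = none) (h4 : Γ' γ = none)
    (hf : HasType dA cA f Γ (Δ.cons γ Z))
    (hg : HasType dA cA (.tup β gs) (Γ'.cons γ Z) Δ')
    (of : OnlyEssentialCuts f) (hgs : ∀ t ∈ gs, OnlyEssentialCuts t) :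
    ∃ t', Relation.ReflTransGen Red (.cut γ f (.tup β gs)) t' ∧ OnlyEssentialCuts t' ∧
      HasType dA cA t' (Γ.union Γ') (Δ.union Δ') := by
  obtain ⟨Δ₁, Ys, hlen, hβ, rfl, hts⟩ := tup_inv hg
  have hΔβ : Δ β = none := disj_none_left h2 (cons_apply_self _ _ _)
  obtain ⟨ts, hlen2, hred2, hoec, hty⟩ := list_norm (fun x => Tm.cut γ f x)
    (fun i t => ∀ hi : i < Ys.length,
      HasType dA cA t (Γ.union Γ') ((Δ.union Δ₁).cons β (Ys.get ⟨i, hi⟩)))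
    (fun i => by
      have hwt : w f * w (gs.get i) ≤ n := by
        have h5 := mem_le_sumW (List.get_mem gs i)
        have h6 := w_pos f
        simp only [w] at hn
        nlinarith
      obtain ⟨t', hr, ho, hty⟩ := ih f (gs.get i) γ Z Γ Δ Γ'
        (Δ₁.cons β (Ys.get (Fin.cast hlen i))) hwt h1 (h2.congr_cons' _) h3 h4 hf (hts i)
        of (hgs _ (List.get_mem gs i))
      refine ⟨t', hr, ho, fun hi => ?_⟩
      rwa [union_cons _ _ hΔβ] at hty)
  refine ⟨.tup β ts, Relation.ReflTransGen.head (Red.r4 γ β f gs) (rtg_tup β hred2),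
    .tup β hoec, ?_⟩
  rw [union_cons _ _ hΔβ]
  exact HasType.tup (by rw [union_apply_none hΔβ]; exact hβ) (hlen2.trans hlen)
    (fun i => hty i ((hlen2.trans hlen) ▸ i.isLt))

/-- Case `g = inj β k g'` : rule (8). -/
theorem gcase_inj {n : ℕ} (ih : KeyIH dA cA n)
    (γ β : Chan) (k : ℕ) (Z : Formula At) (f g' : Tm Ax Chan)
    (Γ Δ Γ' Δ' : Ctx Chan At)
    (hn : w f * w (.inj β k g') ≤ n + 1)
    (h1 : Ctx.Disj Γ Γ') (h2 : Ctx.Disj Δ Δ') (h3 : Δ γ = none) (h4 : Γ' γ = none)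
    (hf : HasType dA cA f Γ (Δ.cons γ Z))
    (hg : HasType dA cA (.inj β k g') (Γ'.cons γ Z) Δ')
    (of : OnlyEssentialCuts f) (og' : OnlyEssentialCuts g') :
    ∃ t', Relation.ReflTransGen Red (.cut γ f (.inj β k g')) t' ∧ OnlyEssentialCuts t' ∧
      HasType dA cA t' (Γ.union Γ') (Δ.union Δ') := by
  obtain ⟨Δ₁, Ys, hk, hβ, rfl, htg⟩ := inj_inv hg
  have hΔβ : Δ β = none := disj_none_left h2 (cons_apply_self _ _ _)
  have hwt : w f * w g' ≤ n := by
    have h6 := w_pos f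
    simp only [w] at hn
    nlinarith
  obtain ⟨t', hr, ho, hty⟩ := ih f g' γ Z Γ Δ Γ' (Δ₁.cons β (Ys.get ⟨k, hk⟩)) hwt h1
    (h2.congr_cons' _) h3 h4 hf htg of og'
  refine ⟨.inj β k t', Relation.ReflTransGen.head (Red.r8 γ β k f g') (rtg_inj β k hr),
    .inj β k ho, ?_⟩
  rw [union_cons _ _ hΔβ] at hty
  rw [union_cons _ _ hΔβ]
  exact HasType.inj (by rw [union_apply_none hΔβ]; exact hβ) hk hty

/-- Case `g = cot β gs`, `β ≠ γ` : rule (10). -/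
theorem gcase_cot {n : ℕ} (ih : KeyIH dA cA n)
    (γ β : Chan) (Z : Formula At) (f : Tm Ax Chan) (gs : List (Tm Ax Chan))
    (Γ Δ Γ' Δ' : Ctx Chan At) (hβγ : β ≠ γ)
    (hn : w f * w (.cot β gs) ≤ n + 1)
    (h1 : Ctx.Disj Γ Γ') (h2 : Ctx.Disj Δ Δ') (h3 : Δ γ = none) (h4 : Γ' γ = none)
    (hf : HasType dA cA f Γ (Δ.cons γ Z))
    (hg : HasType dA cA (.cot β gs) (Γ'.cons γ Z) Δ')
    (of : OnlyEssentialCuts f) (hgs : ∀ t ∈ gs, OnlyEssentialCuts t) :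
    ∃ t', Relation.ReflTransGen Red (.cut γ f (.cot β gs)) t' ∧ OnlyEssentialCuts t' ∧
      HasType dA cA t' (Γ.union Γ') (Δ.union Δ') := by
  obtain ⟨Γ₁, Ys, hlen, hβ, heq, hts⟩ := cot_inv hg
  have hZγ : Γ₁ γ = some Z := by
    have h := congrFun heq γ
    rw [cons_apply_self, cons_apply_ne _ _ _ (Ne.symm hβγ)] at h
    exact h.symm
  have hΓ'β : Γ' β = some (.sum Ys) := by
    have h := congrFun heq β
    rwa [cons_apply_ne _ _ _ hβγ, cons_apply_self] at h
  have hΓβ : Γ β = none := disj_none_left h1 hΓ'β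
  have key_eq : ∀ Y : Formula At, Γ₁.cons β Y = (Γ'.cons β Y).cons γ Z := by
    intro Y; funext c
    by_cases hcγ : c = γ
    · subst hcγ
      rw [cons_apply_ne _ _ _ (Ne.symm hβγ), hZγ, cons_apply_self]
    · rw [cons_apply_ne _ _ _ hcγ]
      by_cases hcβ : c = β
      · subst hcβ; rw [cons_apply_self, cons_apply_self]
      · rw [cons_apply_ne _ _ _ hcβ, cons_apply_ne _ _ _ hcβ]
        have h := congrFun heq c
        rw [cons_apply_ne _ _ _ hcγ, cons_apply_ne _ _ _ hcβ] at h
        exact h.symm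
  obtain ⟨ts, hlen2, hred2, hoec, hty⟩ := list_norm (fun x => Tm.cut γ f x)
    (fun i t => ∀ hi : i < Ys.length,
      HasType dA cA t ((Γ.union Γ').cons β (Ys.get ⟨i, hi⟩)) (Δ.union Δ'))
    (fun i => by
      have hwt : w f * w (gs.get i) ≤ n := by
        have h5 := mem_le_sumW (List.get_mem gs i)
        have h6 := w_pos f
        simp only [w] at hn
        nlinarith
      have hts' := hts i
      rw [key_eq] at hts'
      obtain ⟨t', hr, ho, hty⟩ := ih f (gs.get i) γ Z Γ Δ
        (Γ'.cons β (Ys.get (Fin.cast hlen i))) Δ' hwt (h1.consr_of_some hΓ'β _) h2 h3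
        (by rw [cons_apply_ne _ _ _ (Ne.symm hβγ)]; exact h4) hf hts'
        of (hgs _ (List.get_mem gs i))
      refine ⟨t', hr, ho, fun hi => ?_⟩
      rwa [union_cons _ _ hΓβ] at hty)
  refine ⟨.cot β ts,
    Relation.ReflTransGen.head (Red.r10 γ β f gs hβγ) (rtg_cot β hred2), .cot β hoec, ?_⟩
  have hty' : ∀ i : Fin ts.length,
      HasType dA cA (ts.get i)
        (((Γ.union Γ').del β).cons β (Ys.get (Fin.cast (hlen2.trans hlen) i))) (Δ.union Δ') := by
    intro i
    rw [del_cons]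
    exact hty i ((hlen2.trans hlen) ▸ i.isLt)
  have hfin := HasType.cot (del_apply_self (Γ.union Γ') β) (hlen2.trans hlen) hty'
  rwa [del_cons, cons_eq_self (by rw [union_apply_none hΓβ]; exact hΓ'β)] at hfin

/-- Case `g = prj β k g'`, `β ≠ γ` : rule (6). -/
theorem gcase_prj {n : ℕ} (ih : KeyIH dA cA n)
    (γ β : Chan) (k : ℕ) (Z : Formula At) (f g' : Tm Ax Chan)
    (Γ Δ Γ' Δ' : Ctx Chan At) (hβγ : β ≠ γ)
    (hn : w f * w (.prj β k g') ≤ n + 1)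
    (h1 : Ctx.Disj Γ Γ') (h2 : Ctx.Disj Δ Δ') (h3 : Δ γ = none) (h4 : Γ' γ = none)
    (hf : HasType dA cA f Γ (Δ.cons γ Z))
    (hg : HasType dA cA (.prj β k g') (Γ'.cons γ Z) Δ')
    (of : OnlyEssentialCuts f) (og' : OnlyEssentialCuts g') :
    ∃ t', Relation.ReflTransGen Red (.cut γ f (.prj β k g')) t' ∧ OnlyEssentialCuts t' ∧
      HasType dA cA t' (Γ.union Γ') (Δ.union Δ') := by
  obtain ⟨Γ₁, Ys, hk, hβ, heq, htg⟩ := prj_inv hg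
  have hZγ : Γ₁ γ = some Z := by
    have h := congrFun heq γ
    rw [cons_apply_self, cons_apply_ne _ _ _ (Ne.symm hβγ)] at h
    exact h.symm
  have hΓ'β : Γ' β = some (.prod Ys) := by
    have h := congrFun heq β
    rwa [cons_apply_ne _ _ _ hβγ, cons_apply_self] at h
  have hΓβ : Γ β = none := disj_none_left h1 hΓ'β
  have key_eq : ∀ Y : Formula At, Γ₁.cons β Y = (Γ'.cons β Y).cons γ Z := by
    intro Y; funext c
    by_cases hcγ : c = γ
    · subst hcγ
      rw [cons_apply_ne _ _ _ (Ne.symm hβγ), hZγ, cons_apply_self]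
    · rw [cons_apply_ne _ _ _ hcγ]
      by_cases hcβ : c = β
      · subst hcβ; rw [cons_apply_self, cons_apply_self]
      · rw [cons_apply_ne _ _ _ hcβ, cons_apply_ne _ _ _ hcβ]
        have h := congrFun heq c
        rw [cons_apply_ne _ _ _ hcγ, cons_apply_ne _ _ _ hcβ] at h
        exact h.symm
  have hwt : w f * w g' ≤ n := by
    have h6 := w_pos f
    simp only [w] at hn
    nlinarith
  rw [key_eq] at htg
  obtain ⟨t', hr, ho, hty⟩ := ih f g' γ Z Γ Δ (Γ'.cons β (Ys.get ⟨k, hk⟩)) Δ' hwt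
    (h1.consr_of_some hΓ'β _) h2 h3
    (by rw [cons_apply_ne _ _ _ (Ne.symm hβγ)]; exact h4) hf htg of og'
  refine ⟨.prj β k t',
    Relation.ReflTransGen.head (Red.r6 γ β k f g' hβγ) (rtg_prj β k hr), .prj β k ho, ?_⟩
  rw [union_cons _ _ hΓβ, ← del_cons] at hty
  have hfin := HasType.prj (del_apply_self (Γ.union Γ') β) hk hty
  rwa [del_cons, cons_eq_self (by rw [union_apply_none hΓβ]; exact hΓ'β)] at hfin
/-- Dispatch on `g` when `f` is atomic (so the cut formula is an atom). -/
theorem gdispatch_atom {n : ℕ} (ih : KeyIH dA cA n)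
    (hdA : ∀ a c X, dA a c = some X → ∃ A, X = Formula.atom A)
    (hcA : ∀ a c X, cA a c = some X → ∃ A, X = Formula.atom A)
    (γ : Chan) (Z : Formula At) (f g : Tm Ax Chan) (Γ Δ Γ' Δ' : Ctx Chan At)
    (hn : w f * w g ≤ n + 1)
    (h1 : Ctx.Disj Γ Γ') (h2 : Ctx.Disj Δ Δ') (h3 : Δ γ = none) (h4 : Γ' γ = none)
    (hf : HasType dA cA f Γ (Δ.cons γ Z))
    (hg : HasType dA cA g (Γ'.cons γ Z) Δ')
    (hAf : Atomic f) (of : OnlyEssentialCuts f) (og : OnlyEssentialCuts g) :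
    ∃ t', Relation.ReflTransGen Red (.cut γ f g) t' ∧ OnlyEssentialCuts t' ∧
      HasType dA cA t' (Γ.union Γ') (Δ.union Δ') := by
  obtain ⟨A, rfl⟩ := (atomic_atoms hdA hcA hAf hf).2 γ Z (cons_apply_self _ _ _)
  cases og with
  | id a b =>
    exact ⟨_, Relation.ReflTransGen.refl, .cut γ hAf (.id a b),
      HasType.cut h1 h2 h3 h4 hf hg⟩
  | ax a =>
    exact ⟨_, Relation.ReflTransGen.refl, .cut γ hAf (.ax a),
      HasType.cut h1 h2 h3 h4 hf hg⟩
  | cut δ ha hb =>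
    exact ⟨_, Relation.ReflTransGen.refl, .cut γ hAf (.cut δ ha hb),
      HasType.cut h1 h2 h3 h4 hf hg⟩
  | tup β hgs => exact gcase_tup ih γ β _ f _ Γ Δ Γ' Δ' hn h1 h2 h3 h4 hf hg of hgs
  | inj β k og' => exact gcase_inj ih γ β k _ f _ Γ Δ Γ' Δ' hn h1 h2 h3 h4 hf hg of og'
  | cot β hgs =>
    rcases eq_or_ne β γ with h | hβγ
    · exfalso
      subst h
      obtain ⟨Γ₁, Ys, _, _, heq, _⟩ := cot_inv hg
      have h := congrFun heq β
      rw [cons_apply_self, cons_apply_self] at h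
      exact nomatch h
    · exact gcase_cot ih γ β _ f _ Γ Δ Γ' Δ' hβγ hn h1 h2 h3 h4 hf hg of hgs
  | prj β k og' =>
    rcases eq_or_ne β γ with h | hβγ
    · exfalso
      subst h
      obtain ⟨Γ₁, Ys, _, _, heq, _⟩ := prj_inv hg
      have h := congrFun heq β
      rw [cons_apply_self, cons_apply_self] at h
      exact nomatch h
    · exact gcase_prj ih γ β k _ f _ Γ Δ Γ' Δ' hβγ hn h1 h2 h3 h4 hf hg of og'

theorem key (hdA : ∀ a c X, dA a c = some X → ∃ A, X = Formula.atom A)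
    (hcA : ∀ a c X, cA a c = some X → ∃ A, X = Formula.atom A) :
    ∀ n : ℕ, KeyIH dA cA n := by
  intro n
  induction n with
  | zero =>
    intro f g γ Z Γ Δ Γ' Δ' hn _ _ _ _ _ _ _ _
    have hwf := w_pos f
    have hwg := w_pos g
    have : 2 * 2 ≤ w f * w g := Nat.mul_le_mul hwf hwg
    omega
  | succ n ih =>
    intro f g γ Z Γ Δ Γ' Δ' hn h1 h2 h3 h4 hf hg of og
    cases of with
    | id a b =>
      exact gdispatch_atom ih hdA hcA γ Z _ g Γ Δ Γ' Δ' hn h1 h2 h3 h4 hf hg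
        (.id a b) (.id a b) og
    | ax a =>
      exact gdispatch_atom ih hdA hcA γ Z _ g Γ Δ Γ' Δ' hn h1 h2 h3 h4 hf hg
        (.ax a) (.ax a) og
    | @cut δ f1 g1 ha hb =>
      exact gdispatch_atom ih hdA hcA γ Z _ g Γ Δ Γ' Δ' hn h1 h2 h3 h4 hf hg
        (.cut δ ha hb) (.cut δ ha hb) og
    | @cot α fs hfs =>
      -- rule (3)
      obtain ⟨Γ₀, Xs, hlenf, hαf, rfl, htfs⟩ := cot_inv hf
      have hΓ'α : Γ' α = none := disj_none_right h1 (cons_apply_self _ _ _)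
      obtain ⟨ts, hlen2, hred2, hoec, hty⟩ := list_norm (fun x => Tm.cut γ x g)
        (fun i t => ∀ hi : i < Xs.length,
          HasType dA cA t ((Γ₀.union Γ').cons α (Xs.get ⟨i, hi⟩)) (Δ.union Δ'))
        (fun i => by
          have hwt : w (fs.get i) * w g ≤ n := by
            have h5 := mem_le_sumW (List.get_mem fs i)
            have h6 := w_pos g
            simp only [w] at hn
            nlinarith
          obtain ⟨t', hr, ho, hty⟩ := ih (fs.get i) g γ Z
            (Γ₀.cons α (Xs.get (Fin.cast hlenf i))) Δ Γ' Δ' hwt (h1.congr_cons _) h2 h3 h4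
            (htfs i) hg (hfs _ (List.get_mem fs i)) og
          refine ⟨t', hr, ho, fun hi => ?_⟩
          rwa [cons_union] at hty)
      refine ⟨.cot α ts, Relation.ReflTransGen.head (Red.r3 γ α fs g) (rtg_cot α hred2),
        .cot α hoec, ?_⟩
      rw [cons_union]
      exact HasType.cot (by rw [union_apply_none hαf]; exact hΓ'α) (hlen2.trans hlenf)
        (fun i => hty i ((hlen2.trans hlenf) ▸ i.isLt))
    | @prj α k f' of' =>
      -- rule (7)
      obtain ⟨Γ₀, Xs, hkX, hαf, rfl, htf⟩ := prj_inv hf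
      have hΓ'α : Γ' α = none := disj_none_right h1 (cons_apply_self _ _ _)
      have hwt : w f' * w g ≤ n := by
        have h6 := w_pos g
        simp only [w] at hn
        nlinarith
      obtain ⟨t', hr, ho, hty⟩ := ih f' g γ Z (Γ₀.cons α (Xs.get ⟨k, hkX⟩)) Δ Γ' Δ' hwt
        (h1.congr_cons _) h2 h3 h4 htf hg of' og
      refine ⟨.prj α k t', Relation.ReflTransGen.head (Red.r7 γ α k f' g) (rtg_prj α k hr),
        .prj α k ho, ?_⟩
      rw [cons_union] at hty
      rw [cons_union]
      exact HasType.prj (by rw [union_apply_none hαf]; exact hΓ'α) hkX hty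
    | @tup α fs hfs =>
      rcases eq_or_ne α γ with h | hαγ
      · -- principal side: cut formula is a product
        subst h
        obtain ⟨Δ₁, Xs, hlenf, hαf, heqf, htfs⟩ := tup_inv hf
        have hZ : Z = .prod Xs := by
          have h := congrFun heqf α
          rw [cons_apply_self, cons_apply_self] at h
          exact Option.some.inj h
        subst hZ
        have hΔeq : Δ₁ = Δ := by
          funext c
          by_cases hc : c = α
          · subst hc; rw [hαf, h3]
          · have h := congrFun heqf c
            rw [cons_apply_ne _ _ _ hc, cons_apply_ne _ _ _ hc] at h
            exact h.symm
        rw [hΔeq] at htfs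
        cases og with
        | @prj β k g' og' =>
          rcases eq_or_ne β α with h | hβα
          · -- rule (12)
            subst h
            obtain ⟨Γ₁, Ys, hkY, hβ2, heqg, htg⟩ := prj_inv hg
            have hYX : Ys = Xs := by
              have h := congrFun heqg β
              rw [cons_apply_self, cons_apply_self] at h
              exact (Formula.prod.inj (Option.some.inj h)).symm
            subst hYX
            have hΓeq : Γ₁ = Γ' := by
              funext c
              by_cases hc : c = β
              · subst hc; rw [hβ2, h4]
              · have h := congrFun heqg c
                rw [cons_apply_ne _ _ _ hc, cons_apply_ne _ _ _ hc] at h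
                exact h.symm
            rw [hΓeq] at htg
            have hk' : k < fs.length := by rw [hlenf]; exact hkY
            have hwt : w (fs.get ⟨k, hk'⟩) * w g' ≤ n := by
              have h5 := mem_le_sumW (List.get_mem fs ⟨k, hk'⟩)
              have h6 := w_pos g'
              simp only [w] at hn
              nlinarith
            obtain ⟨t', hr, ho, hty⟩ := ih (fs.get ⟨k, hk'⟩) g' β (Ys.get ⟨k, hkY⟩)
              Γ Δ Γ' Δ' hwt h1 h2 h3 h4 (htfs ⟨k, hk'⟩) htg
              (hfs _ (List.get_mem fs ⟨k, hk'⟩)) og'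
            exact ⟨t', Relation.ReflTransGen.head (Red.r12 β k fs g' hk') hr, ho, hty⟩
          · exact gcase_prj ih α β k _ _ _ Γ Δ Γ' Δ' hβα hn h1 h2 h3 h4 hf hg
              (.tup α hfs) og'
        | @cot β gs hgs =>
          rcases eq_or_ne β α with h | hβα
          · exfalso
            subst h
            obtain ⟨Γ₁, Ys, _, _, heq, _⟩ := cot_inv hg
            have h := congrFun heq β
            rw [cons_apply_self, cons_apply_self] at h
            exact nomatch h
          · exact gcase_cot ih α β _ _ _ Γ Δ Γ' Δ' hβα hn h1 h2 h3 h4 hf hg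
              (.tup α hfs) hgs
        | @tup β gs hgs =>
          exact gcase_tup ih α β _ _ _ Γ Δ Γ' Δ' hn h1 h2 h3 h4 hf hg (.tup α hfs) hgs
        | @inj β k g' og' =>
          exact gcase_inj ih α β k _ _ _ Γ Δ Γ' Δ' hn h1 h2 h3 h4 hf hg (.tup α hfs) og'
        | id a b =>
          obtain ⟨A, hA⟩ := (atomic_atoms hdA hcA (.id a b) hg).1 α _ (cons_apply_self _ _ _)
          exact nomatch hA
        | ax a =>
          obtain ⟨A, hA⟩ := (atomic_atoms hdA hcA (.ax a) hg).1 α _ (cons_apply_self _ _ _)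
          exact nomatch hA
        | @cut δ f1 g1 ha hb =>
          obtain ⟨A, hA⟩ :=
            (atomic_atoms hdA hcA (.cut δ ha hb) hg).1 α _ (cons_apply_self _ _ _)
          exact nomatch hA
      · -- rule (9)
        obtain ⟨Δ₁, Xs, hlenf, hαf, heqf, htfs⟩ := tup_inv hf
        have hZγ : Δ₁ γ = some Z := by
          have h := congrFun heqf γ
          rw [cons_apply_self, cons_apply_ne _ _ _ (Ne.symm hαγ)] at h
          exact h.symm
        have hΔα : Δ α = some (.prod Xs) := by
          have h := congrFun heqf α
          rwa [cons_apply_ne _ _ _ hαγ, cons_apply_self] at h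
        have key_eq : ∀ Y : Formula At, Δ₁.cons α Y = (Δ.cons α Y).cons γ Z := by
          intro Y; funext c
          by_cases hcγ : c = γ
          · subst hcγ
            rw [cons_apply_ne _ _ _ (Ne.symm hαγ), hZγ, cons_apply_self]
          · rw [cons_apply_ne _ _ _ hcγ]
            by_cases hcα : c = α
            · subst hcα; rw [cons_apply_self, cons_apply_self]
            · rw [cons_apply_ne _ _ _ hcα, cons_apply_ne _ _ _ hcα]
              have h := congrFun heqf c
              rw [cons_apply_ne _ _ _ hcγ, cons_apply_ne _ _ _ hcα] at h
              exact h.symm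
        obtain ⟨ts, hlen2, hred2, hoec, hty⟩ := list_norm (fun x => Tm.cut γ x g)
          (fun i t => ∀ hi : i < Xs.length,
            HasType dA cA t (Γ.union Γ') ((Δ.union Δ').cons α (Xs.get ⟨i, hi⟩)))
          (fun i => by
            have hwt : w (fs.get i) * w g ≤ n := by
              have h5 := mem_le_sumW (List.get_mem fs i)
              have h6 := w_pos g
              simp only [w] at hn
              nlinarith
            have htfs' := htfs i
            rw [key_eq] at htfs'
            obtain ⟨t', hr, ho, hty⟩ := ih (fs.get i) g γ Z Γ
              (Δ.cons α (Xs.get (Fin.cast hlenf i))) Γ' Δ' hwt h1 (h2.cons_of_some hΔα _)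
              (by rw [cons_apply_ne _ _ _ (Ne.symm hαγ)]; exact h3) h4 htfs' hg
              (hfs _ (List.get_mem fs i)) og
            refine ⟨t', hr, ho, fun hi => ?_⟩
            rwa [cons_union] at hty)
        refine ⟨.tup α ts,
          Relation.ReflTransGen.head (Red.r9 γ α fs g hαγ) (rtg_tup α hred2), .tup α hoec, ?_⟩
        have hty' : ∀ i : Fin ts.length,
            HasType dA cA (ts.get i) (Γ.union Γ')
              (((Δ.union Δ').del α).cons α (Xs.get (Fin.cast (hlen2.trans hlenf) i))) := by
          intro i
          rw [del_cons]
          exact hty i ((hlen2.trans hlenf) ▸ i.isLt)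
        have hfin := HasType.tup (del_apply_self (Δ.union Δ') α) (hlen2.trans hlenf) hty'
        rwa [del_cons, cons_eq_self (union_apply_some hΔα)] at hfin
    | @inj α k f' of' =>
      rcases eq_or_ne α γ with h | hαγ
      · -- principal side: cut formula is a sum
        subst h
        obtain ⟨Δ₁, Xs, hkX, hαf, heqf, htf⟩ := inj_inv hf
        have hZ : Z = .sum Xs := by
          have h := congrFun heqf α
          rw [cons_apply_self, cons_apply_self] at h
          exact Option.some.inj h
        subst hZ
        have hΔeq : Δ₁ = Δ := by
          funext c
          by_cases hc : c = α
          · subst hc; rw [hαf, h3]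
          · have h := congrFun heqf c
            rw [cons_apply_ne _ _ _ hc, cons_apply_ne _ _ _ hc] at h
            exact h.symm
        rw [hΔeq] at htf
        cases og with
        | @cot β gs hgs =>
          rcases eq_or_ne β α with h | hβα
          · -- rule (11)
            subst h
            obtain ⟨Γ₁, Ys, hleng, hβ2, heqg, htgs⟩ := cot_inv hg
            have hYX : Ys = Xs := by
              have h := congrFun heqg β
              rw [cons_apply_self, cons_apply_self] at h
              exact (Formula.sum.inj (Option.some.inj h)).symm
            subst hYX
            have hΓeq : Γ₁ = Γ' := by
              funext c
              by_cases hc : c = β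
              · subst hc; rw [hβ2, h4]
              · have h := congrFun heqg c
                rw [cons_apply_ne _ _ _ hc, cons_apply_ne _ _ _ hc] at h
                exact h.symm
            rw [hΓeq] at htgs
            have hk' : k < gs.length := by rw [hleng]; exact hkX
            have hwt : w f' * w (gs.get ⟨k, hk'⟩) ≤ n := by
              have h5 := mem_le_sumW (List.get_mem gs ⟨k, hk'⟩)
              have h6 := w_pos (gs.get ⟨k, hk'⟩)
              simp only [w] at hn
              nlinarith
            obtain ⟨t', hr, ho, hty⟩ := ih f' (gs.get ⟨k, hk'⟩) β (Ys.get ⟨k, hkX⟩)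
              Γ Δ Γ' Δ' hwt h1 h2 h3 h4 htf (htgs ⟨k, hk'⟩) of'
              (hgs _ (List.get_mem gs ⟨k, hk'⟩))
            exact ⟨t', Relation.ReflTransGen.head (Red.r11 β k f' gs hk') hr, ho, hty⟩
          · exact gcase_cot ih α β _ _ _ Γ Δ Γ' Δ' hβα hn h1 h2 h3 h4 hf hg
              (.inj α k of') hgs
        | @prj β k' g' og' =>
          rcases eq_or_ne β α with h | hβα
          · exfalso
            subst h
            obtain ⟨Γ₁, Ys, _, _, heq, _⟩ := prj_inv hg
            have h := congrFun heq β
            rw [cons_apply_self, cons_apply_self] at h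
            exact nomatch h
          · exact gcase_prj ih α β k' _ _ _ Γ Δ Γ' Δ' hβα hn h1 h2 h3 h4 hf hg
              (.inj α k of') og'
        | @tup β gs hgs =>
          exact gcase_tup ih α β _ _ _ Γ Δ Γ' Δ' hn h1 h2 h3 h4 hf hg (.inj α k of') hgs
        | @inj β k' g' og' =>
          exact gcase_inj ih α β k' _ _ _ Γ Δ Γ' Δ' hn h1 h2 h3 h4 hf hg (.inj α k of') og'
        | id a b =>
          obtain ⟨A, hA⟩ := (atomic_atoms hdA hcA (.id a b) hg).1 α _ (cons_apply_self _ _ _)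
          exact nomatch hA
        | ax a =>
          obtain ⟨A, hA⟩ := (atomic_atoms hdA hcA (.ax a) hg).1 α _ (cons_apply_self _ _ _)
          exact nomatch hA
        | @cut δ f1 g1 ha hb =>
          obtain ⟨A, hA⟩ :=
            (atomic_atoms hdA hcA (.cut δ ha hb) hg).1 α _ (cons_apply_self _ _ _)
          exact nomatch hA
      · -- rule (5)
        obtain ⟨Δ₁, Xs, hkX, hαf, heqf, htf⟩ := inj_inv hf
        have hZγ : Δ₁ γ = some Z := by
          have h := congrFun heqf γ
          rw [cons_apply_self, cons_apply_ne _ _ _ (Ne.symm hαγ)] at h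
          exact h.symm
        have hΔα : Δ α = some (.sum Xs) := by
          have h := congrFun heqf α
          rwa [cons_apply_ne _ _ _ hαγ, cons_apply_self] at h
        have key_eq : ∀ Y : Formula At, Δ₁.cons α Y = (Δ.cons α Y).cons γ Z := by
          intro Y; funext c
          by_cases hcγ : c = γ
          · subst hcγ
            rw [cons_apply_ne _ _ _ (Ne.symm hαγ), hZγ, cons_apply_self]
          · rw [cons_apply_ne _ _ _ hcγ]
            by_cases hcα : c = α
            · subst hcα; rw [cons_apply_self, cons_apply_self]
            · rw [cons_apply_ne _ _ _ hcα, cons_apply_ne _ _ _ hcα]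
              have h := congrFun heqf c
              rw [cons_apply_ne _ _ _ hcγ, cons_apply_ne _ _ _ hcα] at h
              exact h.symm
        have hwt : w f' * w g ≤ n := by
          have h6 := w_pos g
          simp only [w] at hn
          nlinarith
        rw [key_eq] at htf
        obtain ⟨t', hr, ho, hty⟩ := ih f' g γ Z Γ (Δ.cons α (Xs.get ⟨k, hkX⟩)) Γ' Δ' hwt h1
          (h2.cons_of_some hΔα _)
          (by rw [cons_apply_ne _ _ _ (Ne.symm hαγ)]; exact h3) h4 htf hg of' og
        refine ⟨.inj α k t',
          Relation.ReflTransGen.head (Red.r5 γ α k f' g hαγ) (rtg_inj α k hr), .inj α k ho, ?_⟩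
        rw [cons_union, ← del_cons] at hty
        have hfin := HasType.inj (del_apply_self (Δ.union Δ') α) hkX hty
        rwa [del_cons, cons_eq_self (union_apply_some hΔα)] at hfin
theorem normalize (hdA : ∀ a c X, dA a c = some X → ∃ A, X = Formula.atom A)
    (hcA : ∀ a c X, cA a c = some X → ∃ A, X = Formula.atom A)
    {t : Tm Ax Chan} {Γ Δ : Ctx Chan At} (ht : HasType dA cA t Γ Δ) :
    ∃ t', Relation.ReflTransGen Red t t' ∧ OnlyEssentialCuts t' ∧ HasType dA cA t' Γ Δ := by
  induction ht with
  | id α β A => exact ⟨_, Relation.ReflTransGen.refl, .id α β, HasType.id α β A⟩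
  | ax a => exact ⟨_, Relation.ReflTransGen.refl, .ax a, HasType.ax a⟩
  | @cot Γ Δ α Xs fs hα hlen hts ih =>
    obtain ⟨ts, hlen2, hred2, hoec, hty⟩ := list_norm (fun x => x)
      (fun i t => ∀ hi : i < Xs.length, HasType dA cA t (Γ.cons α (Xs.get ⟨i, hi⟩)) Δ)
      (fun i => by
        obtain ⟨t', hr, ho, hty⟩ := ih i
        exact ⟨t', hr, ho, fun hi => hty⟩)
    refine ⟨.cot α ts, ?_, .cot α hoec,
      HasType.cot hα (hlen2.trans hlen) (fun i => hty i ((hlen2.trans hlen) ▸ i.isLt))⟩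
    have h := rtg_cot α hred2
    simpa using h
  | @tup Γ Δ α Xs fs hα hlen hts ih =>
    obtain ⟨ts, hlen2, hred2, hoec, hty⟩ := list_norm (fun x => x)
      (fun i t => ∀ hi : i < Xs.length, HasType dA cA t Γ (Δ.cons α (Xs.get ⟨i, hi⟩)))
      (fun i => by
        obtain ⟨t', hr, ho, hty⟩ := ih i
        exact ⟨t', hr, ho, fun hi => hty⟩)
    refine ⟨.tup α ts, ?_, .tup α hoec,
      HasType.tup hα (hlen2.trans hlen) (fun i => hty i ((hlen2.trans hlen) ▸ i.isLt))⟩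
    have h := rtg_tup α hred2
    simpa using h
  | @prj Γ Δ α Xs k f hα hk htf ih =>
    obtain ⟨t', hr, ho, hty⟩ := ih
    exact ⟨.prj α k t', rtg_prj α k hr, .prj α k ho, HasType.prj hα hk hty⟩
  | @inj Γ Δ α Xs k f hα hk htf ih =>
    obtain ⟨t', hr, ho, hty⟩ := ih
    exact ⟨.inj α k t', rtg_inj α k hr, .inj α k ho, HasType.inj hα hk hty⟩
  | @cut Γ₁ Δ₁ Γ₂ Δ₂ γ Z f g h1 h2 h3 h4 htf htg ihf ihg =>
    obtain ⟨f', hrf, hof, htf'⟩ := ihf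
    obtain ⟨g', hrg, hog, htg'⟩ := ihg
    obtain ⟨t', hr, ho, hty⟩ := key hdA hcA (w f' * w g') f' g' γ Z Γ₁ Δ₁ Γ₂ Δ₂ le_rfl
      h1 h2 h3 h4 htf' htg' hof hog
    exact ⟨t', ((rtg_cutL γ g hrf).trans (rtg_cutR γ f' hrg)).trans hr, ho, hty⟩

theorem cutElimination (dA cA : Ax → Ctx Chan At)
    (hdA : ∀ a c X, dA a c = some X → ∃ A, X = Formula.atom A)
    (hcA : ∀ a c X, cA a c = some X → ∃ A, X = Formula.atom A) :
    (∀ t : Tm Ax Chan, (∃ Γ Δ, HasType dA cA t Γ Δ) → Acc (fun a b : Tm Ax Chan => Red b a) t) ∧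
    (∀ (t : Tm Ax Chan) (Γ Δ : Ctx Chan At), HasType dA cA t Γ Δ →
      ∃ t', Relation.ReflTransGen Red t t' ∧ OnlyEssentialCuts t') := by
  constructor
  · intro t _
    exact red_acc t
  · intro t Γ Δ ht
    obtain ⟨t', h1', h2', _⟩ := normalize hdA hcA ht
    exact ⟨t', h1', h2'⟩

end Stmt2
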